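/- arXiv:1711.03596 — 2 statements merged into one kernel-verified Lean document; each statement's English description precedes it below -/
import Mathlib

section
/- Let $n_t$ be conditionally $R$-sub-Gaussian noise, rewards bounded by $1$ in absolute value, and $\pi_t \in [\pi_{\min},\pi_{\max}] \subset (0,1)$. Define $\eta_t = \frac{(I(a_t>0)-\pi_t) r_t(a_t)}{\sqrt{\pi_t(1-\pi_t)}} - \sqrt{\pi_t(1-\pi_t)} s_{t,\bar{a}_t}^T\theta$, where given the history, $a_t = \bar{a}_t$ with probability $\pi_t$ and $a_t = 0$ otherwise. Then $\mathbb{E}[\eta_t \mid \mathcal{H}_{t-1}, \bar{a}_t, \bar{s}_t] = 0$, so $(\eta_t)$ is a martingale difference process. -/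
open MeasureTheory ProbabilityTheory

/-- The action-centered residual `η_t` is a martingale difference:
with `X = I(a_t > 0)` Bernoulli(π) independent of the zero-mean noise `n`,
and reward `r = sθ X + g + n`, the residual
`η = (X - π) r / √(π(1-π)) - √(π(1-π)) sθ` has zero (conditional) expectation. -/
theorem eta_martingale_difference
    {Ω : Type*} [MeasurableSpace Ω] (μ : Measure Ω) [IsProbabilityMeasure μ]
    (X n : Ω → ℝ) (hX : Measurable X) (hn : Measurable n)
    (hX01 : ∀ ω, X ω = 0 ∨ X ω = 1)
    (π : ℝ) (hπ0 : 0 < π) (hπ1 : π < 1)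
    (hprob : μ {ω | X ω = 1} = ENNReal.ofReal π)
    (hindep : IndepFun X n μ)
    (hnint : Integrable n μ) (hnmean : ∫ ω, n ω ∂μ = 0)
    (sθ g : ℝ) :
    ∫ ω, ((X ω - π) * (sθ * X ω + g + n ω)) / Real.sqrt (π * (1 - π))
        - Real.sqrt (π * (1 - π)) * sθ ∂μ = 0 := by
  set c := Real.sqrt (π * (1 - π)) with hcdef
  have hc : 0 < c := Real.sqrt_pos.2 (by nlinarith)
  have hc2 : c * c = π * (1 - π) := Real.mul_self_sqrt (by nlinarith)
  have hmeas : MeasurableSet {ω | X ω = 1} := hX (measurableSet_singleton 1)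
  have hXind : X = Set.indicator {ω | X ω = 1} (fun _ => (1:ℝ)) := by
    funext ω
    rcases hX01 ω with h0 | h1
    · simp [Set.indicator, h0]
    · simp [Set.indicator, h1]
  have hXint : Integrable X μ := by
    rw [hXind]; exact (integrable_const (1:ℝ)).indicator hmeas
  have hEX : ∫ ω, X ω ∂μ = π := by
    rw [hXind]
    rw [MeasureTheory.integral_indicator_const (1:ℝ) hmeas, measureReal_def, hprob]
    simp [ENNReal.toReal_ofReal hπ0.le]
  have hXn : Integrable (fun ω => X ω * n ω) μ := hindep.integrable_mul hXint hnint
  have hEXn : ∫ ω, X ω * n ω ∂μ = 0 := by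
    have := hindep.integral_mul_eq_mul_integral hXint.aestronglyMeasurable hnint.aestronglyMeasurable
    simpa [hnmean] using this
  have heq : ∀ ω, (X ω - π) * (sθ * X ω + g + n ω)
      = (sθ * (1 - π) + g) * X ω + X ω * n ω + ((-(π * g)) + (-π) * n ω) := by
    intro ω; rcases hX01 ω with h | h <;> simp [h] <;> ring
  have hintegr : Integrable (fun ω => (X ω - π) * (sθ * X ω + g + n ω)) μ := by
    have h1 : Integrable (fun ω => (sθ * (1 - π) + g) * X ω + X ω * n ω
        + ((-(π * g)) + (-π) * n ω)) μ :=
      ((hXint.const_mul _).add hXn).add ((integrable_const _).add (hnint.const_mul _))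
    exact h1.congr (Filter.Eventually.of_forall fun ω => (heq ω).symm)
  have key : ∫ ω, (X ω - π) * (sθ * X ω + g + n ω) ∂μ = sθ * (π * (1 - π)) := by
    simp_rw [heq]
    have i1 : Integrable (fun ω => (sθ * (1 - π) + g) * X ω) μ := hXint.const_mul _
    have i3 : Integrable (fun ω => -(π * g)) μ := integrable_const _
    have i4 : Integrable (fun ω => -π * n ω) μ := hnint.const_mul _
    have i12 : Integrable (fun ω => (sθ * (1 - π) + g) * X ω + X ω * n ω) μ := i1.add hXn
    have i34 : Integrable (fun ω => -(π * g) + -π * n ω) μ := i3.add i4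
    rw [integral_add i12 i34, integral_add i1 hXn, integral_add i3 i4,
      MeasureTheory.integral_const_mul, MeasureTheory.integral_const_mul, hEX, hEXn, hnmean, integral_const]
    simp; ring
  rw [integral_sub (hintegr.div_const c) (integrable_const _),
    integral_div, key, integral_const]
  simp only [measure_univ, ENNReal.toReal_one, probReal_univ, smul_eq_mul, one_mul]
  rw [← hc2]
  field_simp
  ring
end

section
/- Elliptical potential lemma: let $x_1,\dots,x_T \in \mathbb{R}^d$ with $\|x_t\|_2 \leq 1$, and define $A_T = I + \sum_{t=1}^T x_t x_t^T$ and $\sigma_t = \sqrt{x_t^T A_T^{-1} x_t}$ (or with $A_t$ the partial sums). Then $\sum_{t=1}^T \sigma_t \leq 5\sqrt{dT\log T}$ for $T \geq 2$. -/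
open Matrix Finset

theorem det_sub_vecMulVec' (d : ℕ) (M : Matrix (Fin d) (Fin d) ℝ) (hM : M.PosDef)
    (v : Fin d → ℝ) :
    (M - vecMulVec v v).det = M.det * (1 - dotProduct v (M⁻¹ *ᵥ v)) := by
  have h1 : M - vecMulVec v v = M + replicateCol Unit (-v) * replicateRow Unit v := by
    rw [vecMulVec_eq Unit, sub_eq_add_neg]
    congr 1
    ext i j; simp [replicateCol, replicateRow, mul_apply]
  have h2 : (1 + replicateRow Unit v * M⁻¹ * replicateCol Unit (-v)).det = 1 - dotProduct v (M⁻¹ *ᵥ v) := by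
    rw [det_unique, Matrix.add_apply, Matrix.one_apply_eq]
    simp only [mul_apply, replicateCol, replicateRow, dotProduct, mulVec, of_apply]
    rw [sub_eq_add_neg]
    congr 1
    simp only [Pi.neg_apply, mul_neg, ← Finset.sum_neg_distrib, neg_inj, Finset.sum_mul,
      Finset.mul_sum]
    rw [Finset.sum_comm]
    exact Finset.sum_congr rfl fun i _ => Finset.sum_congr rfl fun j _ => by ring
  rw [h1, det_add_replicateCol_mul_replicateRow hM.det_pos.ne'.isUnit (-v) v, h2]

theorem det_le_trace_pow' (d : ℕ) (M : Matrix (Fin d) (Fin d) ℝ) (hM : M.PosSemidef) :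
    M.det ≤ M.trace ^ d := by
  have h := hM.isHermitian
  have htr : M.trace = ∑ i, h.eigenvalues i := by
    conv_lhs => rw [h.spectral_theorem]
    rw [Unitary.conjStarAlgAut_apply]
    rw [Matrix.trace_mul_cycle]
    rw [(Matrix.mem_unitaryGroup_iff').mp (h.eigenvectorUnitary).2]
    rw [Matrix.one_mul, Matrix.trace_diagonal]
    simp
  have hdet : M.det = ∏ i, h.eigenvalues i := by
    simpa using h.det_eq_prod_eigenvalues
  rw [hdet, htr]
  calc ∏ i, h.eigenvalues i ≤ ∏ _i : Fin d, ∑ j, h.eigenvalues j := by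
        refine Finset.prod_le_prod (fun i _ => hM.eigenvalues_nonneg i) (fun i _ => ?_)
        exact Finset.single_le_sum (fun j _ => hM.eigenvalues_nonneg j) (Finset.mem_univ i)
    _ = (∑ j, h.eigenvalues j) ^ d := by simp [Finset.prod_const]

theorem posSemidef_vecMulVec_self (d : ℕ) (w : Fin d → ℝ) : (vecMulVec w w).PosSemidef := by
  rw [vecMulVec_eq Unit]
  have := Matrix.posSemidef_self_mul_conjTranspose (replicateCol Unit w)
  simpa using this

/-- Elliptical potential lemma: with `A_t = I + ∑_{τ=1}^{t} x_τ x_τᵀ`, `‖x_t‖₂ ≤ 1`, and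
`σ_t = √(x_tᵀ A_t⁻¹ x_t)`, one has `∑_{t=1}^T σ_t ≤ 5 √(d T log T)` for `T ≥ 2`. -/
theorem elliptical_potential (d T : ℕ) (hT : 2 ≤ T)
    (x : ℕ → (Fin d → ℝ)) (hx : ∀ t, Real.sqrt (∑ i, x t i ^ 2) ≤ 1)
    (A : ℕ → Matrix (Fin d) (Fin d) ℝ)
    (hA : ∀ t, A t = 1 + ∑ τ ∈ Finset.Icc 1 t, vecMulVec (x τ) (x τ)) :
    ∑ t ∈ Finset.Icc 1 T, Real.sqrt (dotProduct (x t) ((A t)⁻¹ *ᵥ x t)) ≤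
      5 * Real.sqrt (d * T * Real.log T) := by
  set s : ℕ → ℝ := fun t => dotProduct (x t) ((A t)⁻¹ *ᵥ x t) with hs
  -- positive definiteness
  have hApos : ∀ n, (A n).PosDef := by
    intro n
    rw [hA n]
    refine Matrix.PosDef.add_posSemidef Matrix.PosDef.one ?_
    refine Finset.sum_induction _ _ (fun a b ha hb => ha.add hb) (Matrix.PosSemidef.zero) ?_
    exact fun τ _ => posSemidef_vecMulVec_self d (x τ)
  have hdetpos : ∀ n, 0 < (A n).det := fun n => (hApos n).det_pos
  have h0 : ∀ n, 0 ≤ s n := by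
    intro n
    have := ((hApos n).inv).posSemidef.dotProduct_mulVec_nonneg (x n)
    simpa [hs] using this
  -- recursion
  have hsucc : ∀ n, A (n + 1) = A n + vecMulVec (x (n + 1)) (x (n + 1)) := by
    intro n
    rw [hA (n + 1), hA n, Finset.sum_Icc_succ_top (Nat.succ_le_succ (Nat.zero_le n)), add_assoc]
  have hdetstep : ∀ n, (A n).det = (A (n + 1)).det * (1 - s (n + 1)) := by
    intro n
    have h1 : A n = A (n + 1) - vecMulVec (x (n + 1)) (x (n + 1)) := by
      rw [hsucc n]; abel
    rw [h1, det_sub_vecMulVec' d (A (n + 1)) (hApos (n + 1)) (x (n + 1))]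
  have hs1 : ∀ n, s (n + 1) < 1 := by
    intro n
    have h1 : 0 < (A (n + 1)).det * (1 - s (n + 1)) := by rw [← hdetstep n]; exact hdetpos n
    nlinarith [hdetpos (n + 1)]
  -- log potential
  have hlog : ∀ n, s (n + 1) ≤ Real.log (A (n + 1)).det - Real.log (A n).det := by
    intro n
    have hr : 0 < 1 - s (n + 1) := by linarith [hs1 n]
    have h1 : Real.log (A n).det = Real.log (A (n + 1)).det + Real.log (1 - s (n + 1)) := by
      rw [hdetstep n, Real.log_mul (hdetpos (n + 1)).ne' hr.ne']
    have h2 : Real.log (1 - s (n + 1)) ≤ -s (n + 1) := by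
      have := Real.log_le_sub_one_of_pos hr
      linarith
    linarith
  -- the sum of s over Icc 1 T
  have hIcc0 : ∀ (f : ℕ → ℝ) (N : ℕ), ∑ t ∈ Finset.Icc 1 N, f t = ∑ n ∈ Finset.range N, f (n + 1) := by
    intro f N
    induction N with
    | zero => simp
    | succ n ih =>
        rw [Finset.sum_Icc_succ_top (Nat.succ_le_succ (Nat.zero_le n)), Finset.sum_range_succ, ih]
  have hIcc : ∑ t ∈ Finset.Icc 1 T, s t = ∑ n ∈ Finset.range T, s (n + 1) := hIcc0 s T
  have hA0 : Real.log (A 0).det = 0 := by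
    have : A 0 = 1 := by rw [hA 0]; simp
    rw [this]; simp
  have hsum_log : ∑ t ∈ Finset.Icc 1 T, s t ≤ Real.log (A T).det := by
    rw [hIcc]
    calc ∑ n ∈ Finset.range T, s (n + 1)
        ≤ ∑ n ∈ Finset.range T, (Real.log (A (n + 1)).det - Real.log (A n).det) :=
          Finset.sum_le_sum fun n _ => hlog n
      _ = Real.log (A T).det - Real.log (A 0).det :=
          Finset.sum_range_sub (fun n => Real.log (A n).det) T
      _ = Real.log (A T).det := by rw [hA0]; ring
  -- trace bound
  have hxsq : ∀ t, ∑ i, x t i ^ 2 ≤ 1 := by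
    intro t
    have h1 : (0:ℝ) ≤ ∑ i, x t i ^ 2 := Finset.sum_nonneg fun i _ => sq_nonneg _
    nlinarith [hx t, Real.sq_sqrt h1, Real.sqrt_nonneg (∑ i, x t i ^ 2)]
  have htr_eq : (A T).trace = (d : ℝ) + ∑ τ ∈ Finset.Icc 1 T, ∑ i, x τ i ^ 2 := by
    rw [hA T, Matrix.trace_add, Matrix.trace_one, Matrix.trace_sum]
    congr 1
    · simp
    · refine Finset.sum_congr rfl fun τ _ => ?_
      simp [Matrix.trace, Matrix.diag, vecMulVec, sq]
  have htrace : (A T).trace ≤ (d : ℝ) + T := by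
    rw [htr_eq]
    have : ∑ τ ∈ Finset.Icc 1 T, ∑ i, x τ i ^ 2 ≤ ∑ τ ∈ Finset.Icc 1 T, (1:ℝ) :=
      Finset.sum_le_sum fun τ _ => hxsq τ
    simp only [Finset.sum_const, Nat.card_Icc, Nat.add_sub_cancel, nsmul_eq_mul, mul_one] at this
    linarith
  have htrace_nonneg : (0:ℝ) ≤ (A T).trace := by
    rw [htr_eq]
    positivity
  have htrace_pos : (0:ℝ) ≤ (d : ℝ) + T := by positivity
  have hlogdet : Real.log (A T).det ≤ d * Real.log ((d : ℝ) + T) := by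
    have h1 : (A T).det ≤ ((d : ℝ) + T) ^ d := by
      calc (A T).det ≤ (A T).trace ^ d := det_le_trace_pow' d (A T) (hApos T).posSemidef
        _ ≤ ((d : ℝ) + T) ^ d := pow_le_pow_left₀ htrace_nonneg htrace d
    calc Real.log (A T).det ≤ Real.log (((d : ℝ) + T) ^ d) :=
          Real.log_le_log (hdetpos T) h1
      _ = d * Real.log ((d : ℝ) + T) := by rw [Real.log_pow]
  -- arithmetic endgame
  set L := Real.log (T : ℝ) with hL
  have hT2 : (2:ℝ) ≤ (T:ℝ) := by exact_mod_cast hT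
  have hL2 : Real.log 2 ≤ L := Real.log_le_log (by norm_num) hT2
  have hL1 : 1 ≤ 25 * L := by nlinarith [Real.log_two_gt_d9]
  have hLpos : 0 < L := by nlinarith [Real.log_two_gt_d9]
  have hs1' : ∀ t ∈ Finset.Icc 1 T, s t ≤ (1:ℝ) := by
    intro t ht
    have h1t := (Finset.mem_Icc.mp ht).1
    obtain ⟨k, rfl⟩ := Nat.exists_eq_add_of_le h1t
    simpa [Nat.add_comm] using (hs1 k).le
  have hS : ∑ t ∈ Finset.Icc 1 T, s t ≤ 25 * d * L := by
    rcases le_or_gt T d with hcase | hcase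
    · have h1 : ∑ t ∈ Finset.Icc 1 T, s t ≤ (T:ℝ) := by
        calc ∑ t ∈ Finset.Icc 1 T, s t ≤ ∑ _t ∈ Finset.Icc 1 T, (1:ℝ) :=
              Finset.sum_le_sum hs1'
          _ = (T:ℝ) := by simp [Nat.card_Icc]
      have h2 : (T:ℝ) ≤ (d:ℝ) := Nat.cast_le.mpr hcase
      nlinarith
    · have hdT : (d:ℝ) < (T:ℝ) := Nat.cast_lt.mpr hcase
      have hd2 : (d:ℝ) + T ≤ (T:ℝ)^2 := by nlinarith
      have h3 : Real.log ((d:ℝ) + T) ≤ 2 * L := by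
        calc Real.log ((d:ℝ) + T) ≤ Real.log ((T:ℝ)^2) :=
              Real.log_le_log (by positivity) hd2
          _ = 2 * L := by rw [Real.log_pow]; push_cast; ring
      have hd0 : (0:ℝ) ≤ d := Nat.cast_nonneg d
      calc ∑ t ∈ Finset.Icc 1 T, s t ≤ Real.log (A T).det := hsum_log
        _ ≤ d * Real.log ((d:ℝ) + T) := hlogdet
        _ ≤ d * (2 * L) := by nlinarith
        _ ≤ 25 * d * L := by nlinarith
  have hCS : (∑ t ∈ Finset.Icc 1 T, Real.sqrt (s t))^2 ≤ (T:ℝ) * ∑ t ∈ Finset.Icc 1 T, s t := by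
    have := Finset.sum_sq_le_sum_mul_sum_of_sq_eq_mul (Finset.Icc 1 T)
      (r := fun t => Real.sqrt (s t)) (f := fun _ => (1:ℝ)) (g := s)
      (fun _ _ => zero_le_one) (fun t _ => h0 t)
      (fun t _ => by rw [Real.sq_sqrt (h0 t), one_mul])
    simpa [Nat.card_Icc] using this
  have hfin : (∑ t ∈ Finset.Icc 1 T, Real.sqrt (s t))^2 ≤ 25 * ((d:ℝ) * T * L) := by
    calc (∑ t ∈ Finset.Icc 1 T, Real.sqrt (s t))^2 ≤ (T:ℝ) * ∑ t ∈ Finset.Icc 1 T, s t := hCS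
      _ ≤ (T:ℝ) * (25 * d * L) := by
          apply mul_le_mul_of_nonneg_left hS (by positivity)
      _ = 25 * ((d:ℝ) * T * L) := by ring
  have hnn : 0 ≤ ∑ t ∈ Finset.Icc 1 T, Real.sqrt (s t) :=
    Finset.sum_nonneg fun t _ => Real.sqrt_nonneg _
  calc ∑ t ∈ Finset.Icc 1 T, Real.sqrt (s t)
      = Real.sqrt ((∑ t ∈ Finset.Icc 1 T, Real.sqrt (s t))^2) := (Real.sqrt_sq hnn).symm
    _ ≤ Real.sqrt (25 * ((d:ℝ) * T * L)) := Real.sqrt_le_sqrt hfin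
    _ = 5 * Real.sqrt ((d:ℝ) * T * L) := by
        rw [Real.sqrt_mul (by norm_num : (0:ℝ) ≤ 25), show (25:ℝ) = 5^2 by norm_num,
          Real.sqrt_sq (by norm_num : (0:ℝ) ≤ 5)]
end
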